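/- Let A, G ∈ ℝ^{n×n} be symmetric positive definite with G ⪰ A and (G−A)u ≠ 0 for u ∈ ℝⁿ. Then σ_A(SR1(G, A, u)) = σ_A(G) − ‖(G−A)u‖²_{A⁻¹}/⟨(G−A)u, u⟩ ≤ σ_A(G), where σ_A(H) = Trace(A⁻¹H) − n and ‖v‖²_{A⁻¹} = vᵀA⁻¹v. -/

import Mathlib

open Matrix

lemma trace_mul_vecMulVec {n : ℕ} (M : Matrix (Fin n) (Fin n) ℝ) (v w : Fin n → ℝ) :
    (M * vecMulVec v w).trace = w ⬝ᵥ (M *ᵥ v) := by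
  rw [vecMulVec_eq Unit, ← Matrix.mul_assoc, trace_mul_comm]
  simp [trace, Matrix.mul_apply, dotProduct, mulVec, Finset.mul_sum, mul_comm]

/-- The SR1 update decreases `σ_A` by exactly
`‖(G-A)u‖²_{A⁻¹}/⟨(G-A)u, u⟩`, and in particular `σ_A(SR1(G,A,u)) ≤ σ_A(G)`. -/
theorem stmt_13 {n : ℕ} (A G : Matrix (Fin n) (Fin n) ℝ) (u : Fin n → ℝ)
    (hA : A.PosDef) (hG : G.PosDef) (hGA : (G - A).PosSemidef)
    (huGA : (G - A) *ᵥ u ≠ 0) :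
    (A⁻¹ * (G - (((G - A) *ᵥ u) ⬝ᵥ u)⁻¹ •
        vecMulVec ((G - A) *ᵥ u) ((G - A) *ᵥ u))).trace - n =
      ((A⁻¹ * G).trace - n) -
        (((G - A) *ᵥ u) ⬝ᵥ (A⁻¹ *ᵥ ((G - A) *ᵥ u))) / (((G - A) *ᵥ u) ⬝ᵥ u) ∧
    (A⁻¹ * (G - (((G - A) *ᵥ u) ⬝ᵥ u)⁻¹ •
        vecMulVec ((G - A) *ᵥ u) ((G - A) *ᵥ u))).trace - n ≤
      (A⁻¹ * G).trace - n := by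
  set v : Fin n → ℝ := (G - A) *ᵥ u with hv
  have heq : (A⁻¹ * (G - (v ⬝ᵥ u)⁻¹ • vecMulVec v v)).trace - n =
      ((A⁻¹ * G).trace - n) - (v ⬝ᵥ (A⁻¹ *ᵥ v)) / (v ⬝ᵥ u) := by
    rw [Matrix.mul_sub, Matrix.mul_smul, trace_sub, trace_smul,
      trace_mul_vecMulVec, smul_eq_mul, inv_mul_eq_div]
    ring
  refine ⟨heq, ?_⟩
  rw [heq]
  have hd : 0 < v ⬝ᵥ u := by
    rcases lt_or_eq_of_le (hGA.dotProduct_mulVec_nonneg u) with h | h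
    · rwa [star_trivial, ← dotProduct_comm] at h
    · exfalso
      exact huGA ((hGA.dotProduct_mulVec_zero_iff u).mp (by simpa using h.symm))
  have hq : 0 < v ⬝ᵥ (A⁻¹ *ᵥ v) := by
    simpa using hA.inv.dotProduct_mulVec_pos huGA
  linarith [div_pos hq hd]
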